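/- Let d', k ≥ 0 be integers, let G be a graph with maximum degree at most d', and let 𝒯 be a tangle in G of order at least (k+1)². Let v ∈ V(G) and let 𝒫 be a set of paths of G each with one end v, such that each path in 𝒫 has rank at most k relative to 𝒯. Then the union of the vertex sets of the paths in 𝒫 has rank at most (k d')^k relative to 𝒯. -/

import Mathlib

/-- A separation of a graph `G`: a pair `(A, B)` of subgraphs with union `G`
and no edges in `A ⊓ B`. -/
structure Separation {V : Type*} (G : SimpleGraph V) where
  A : G.Subgraph
  B : G.Subgraph
  union_eq : A ⊔ B = ⊤
  edge_inter : (A ⊓ B).edgeSet = ∅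

namespace Separation

variable {V : Type*} {G : SimpleGraph V}

/-- The order of a separation: the number of vertices in `V(A) ∩ V(B)`. -/
noncomputable def order (S : Separation G) : ℕ := (S.A.verts ∩ S.B.verts).ncard

/-- The reversed orientation of a separation. -/
def flip (S : Separation G) : Separation G :=
  ⟨S.B, S.A, by rw [sup_comm]; exact S.union_eq, by rw [inf_comm]; exact S.edge_inter⟩

end Separation

/-- A tangle of order `θ` in `G`: an orientation of all separations of order
`< θ` satisfying the three tangle axioms. -/
structure Tangle {V : Type*} (G : SimpleGraph V) (θ : ℕ) where
  mem : Set (Separation G)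
  order_lt : ∀ S ∈ mem, S.order < θ
  oriented : ∀ S : Separation G, S.order < θ → S ∈ mem ∨ S.flip ∈ mem
  not_three : ∀ S₁ ∈ mem, ∀ S₂ ∈ mem, ∀ S₃ ∈ mem,
    S₁.A ⊔ S₂.A ⊔ S₃.A ≠ (⊤ : G.Subgraph)
  small : ∀ S ∈ mem, S.A.verts ≠ Set.univ

/-- The rank of a vertex set `X` relative to a tangle: the minimum order of a
separation `(A,B)` in the tangle with `X ⊆ V(A)`, or `θ` if there is none. -/
noncomputable def Tangle.rank {V : Type*} {G : SimpleGraph V} {θ : ℕ}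
    (T : Tangle G θ) (X : Set V) : ℕ :=
  sInf ({θ} ∪ {n | ∃ S ∈ T.mem, X ⊆ S.A.verts ∧ S.order = n})

/- ================= Auxiliary infrastructure ================= -/

namespace NexusAux

open SimpleGraph

variable {V : Type*} {G : SimpleGraph V} {θ : ℕ}

/-- Boundary of a separation. -/
def bd (S : Separation G) : Set V := S.A.verts ∩ S.B.verts

lemma order_eq_bd (S : Separation G) : S.order = (bd S).ncard := rfl

lemma verts_cover (S : Separation G) (x : V) : x ∈ S.A.verts ∨ x ∈ S.B.verts := by
  have h := congrArg SimpleGraph.Subgraph.verts S.union_eq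
  rw [SimpleGraph.Subgraph.verts_sup, SimpleGraph.Subgraph.verts_top] at h
  have : x ∈ S.A.verts ∪ S.B.verts := h ▸ Set.mem_univ x
  exact this

lemma adj_cover (S : Separation G) {a b : V} (h : G.Adj a b) :
    S.A.Adj a b ∨ S.B.Adj a b := by
  have h2 : (S.A ⊔ S.B).Adj a b := by rw [S.union_eq]; exact SimpleGraph.Subgraph.top_adj.mpr h
  exact SimpleGraph.Subgraph.sup_adj.mp h2

lemma not_both_adj (S : Separation G) {a b : V} (hA : S.A.Adj a b) (hB : S.B.Adj a b) : False := by
  have : s(a, b) ∈ (S.A ⊓ S.B).edgeSet := SimpleGraph.Subgraph.mem_edgeSet.mpr ⟨hA, hB⟩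
  rw [S.edge_inter] at this
  exact this

/-- Build a separation from covering data. -/
def mkSep (A B : G.Subgraph)
    (hv : ∀ x, x ∈ A.verts ∨ x ∈ B.verts)
    (he : ∀ a b, G.Adj a b → A.Adj a b ∨ B.Adj a b)
    (hd : ∀ a b, A.Adj a b → B.Adj a b → False) : Separation G where
  A := A
  B := B
  union_eq := by
    apply SimpleGraph.Subgraph.ext
    · rw [SimpleGraph.Subgraph.verts_sup, SimpleGraph.Subgraph.verts_top]
      exact Set.eq_univ_of_forall hv
    · funext a b
      apply propext
      constructor
      · rintro (h | h)
        · exact SimpleGraph.Subgraph.top_adj.mpr (A.adj_sub h)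
        · exact SimpleGraph.Subgraph.top_adj.mpr (B.adj_sub h)
      · intro h
        exact he a b (SimpleGraph.Subgraph.top_adj.mp h)
  edge_inter := by
    rw [Set.eq_empty_iff_forall_notMem]
    intro e
    induction e using Sym2.ind with
    | _ a b =>
      intro hmem
      have h := SimpleGraph.Subgraph.mem_edgeSet.mp hmem
      exact hd a b h.1 h.2

@[simp] lemma mkSep_A (A B : G.Subgraph) (hv he hd) : (mkSep A B hv he hd).A = A := rfl
@[simp] lemma mkSep_B (A B : G.Subgraph) (hv he hd) : (mkSep A B hv he hd).B = B := rfl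

/-- flip's A-side. -/
lemma flip_A (S : Separation G) : S.flip.A = S.B := rfl

/-- Master membership lemma. -/
lemma mem_of_cover (T : Tangle G θ) {S S₁ S₂ : Separation G}
    (h₁ : S₁ ∈ T.mem) (h₂ : S₂ ∈ T.mem)
    (hcov : S₁.A ⊔ S₂.A ⊔ S.B = ⊤) (hord : S.order < θ) : S ∈ T.mem := by
  rcases T.oriented S hord with h | h
  · exact h
  · exact absurd hcov (T.not_three S₁ h₁ S₂ h₂ S.flip h)

/-- Vertex-only subgraph. -/
def vsub (G : SimpleGraph V) (W : Set V) : G.Subgraph where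
  verts := W
  Adj := fun _ _ => False
  adj_sub := False.elim
  edge_vert := False.elim
  symm := ⟨fun _ _ h => h.elim⟩

@[simp] lemma vsub_verts (W : Set V) : (vsub G W).verts = W := rfl
@[simp] lemma vsub_adj (W : Set V) (a b : V) : ¬ (vsub G W).Adj a b := fun h => h

/-- The (⊥, ⊤) separation. -/
def botSep (G : SimpleGraph V) : Separation G :=
  mkSep ⊥ ⊤ (fun x => Or.inr (Set.mem_univ x))
    (fun _ _ h => Or.inr (SimpleGraph.Subgraph.top_adj.mpr h))
    (fun _ _ h _ => by exact (SimpleGraph.Subgraph.not_bot_adj h))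

lemma botSep_order (G : SimpleGraph V) : (botSep G).order = 0 := by
  simp [Separation.order, botSep, mkSep]

lemma botSep_mem (T : Tangle G θ) (hθ : 0 < θ) : botSep G ∈ T.mem := by
  rcases T.oriented (botSep G) (by rw [botSep_order]; exact hθ) with h | h
  · exact h
  · exact absurd (by simp [botSep, flip_A, mkSep] : (botSep G).flip.A.verts = Set.univ)
      (T.small _ h)

/-- Separation (W as vertex set, ⊤). -/
def xsep (G : SimpleGraph V) (W : Set V) : Separation G :=
  mkSep (vsub G W) ⊤ (fun x => Or.inr (Set.mem_univ x))
    (fun _ _ h => Or.inr (SimpleGraph.Subgraph.top_adj.mpr h))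
    (fun _ _ h _ => h)

lemma xsep_order (W : Set V) : (xsep G W).order = W.ncard := by
  simp [Separation.order, xsep, mkSep]

lemma xsep_bd (W : Set V) : bd (xsep G W) = W := by
  simp [bd, xsep, mkSep]

lemma xsep_mem (T : Tangle G θ) {W : Set V} (h : W.ncard < θ) : xsep G W ∈ T.mem := by
  have h0 : 0 < θ := lt_of_le_of_lt (Nat.zero_le _) h
  apply mem_of_cover T (botSep_mem T h0) (botSep_mem T h0)
  · show (⊥ : G.Subgraph) ⊔ ⊥ ⊔ ⊤ = ⊤
    simp
  · rw [xsep_order]; exact h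

/-- Union ("corner") of two separations. -/
def usep (S₁ S₂ : Separation G) : Separation G :=
  mkSep (S₁.A ⊔ S₂.A) (S₁.B ⊓ S₂.B)
    (by
      intro x
      rcases verts_cover S₁ x with h | h
      · exact Or.inl (Or.inl h)
      rcases verts_cover S₂ x with h' | h'
      · exact Or.inl (Or.inr h')
      · exact Or.inr ⟨h, h'⟩)
    (by
      intro a b hab
      rcases adj_cover S₁ hab with h | h
      · exact Or.inl (SimpleGraph.Subgraph.sup_adj.mpr (Or.inl h))
      rcases adj_cover S₂ hab with h' | h'
      · exact Or.inl (SimpleGraph.Subgraph.sup_adj.mpr (Or.inr h'))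
      · exact Or.inr (SimpleGraph.Subgraph.inf_adj.mpr ⟨h, h'⟩))
    (by
      intro a b hA hB
      have hB' := SimpleGraph.Subgraph.inf_adj.mp hB
      rcases SimpleGraph.Subgraph.sup_adj.mp hA with h | h
      · exact not_both_adj S₁ h hB'.1
      · exact not_both_adj S₂ h hB'.2)

lemma usep_A_verts (S₁ S₂ : Separation G) :
    (usep S₁ S₂).A.verts = S₁.A.verts ∪ S₂.A.verts := rfl

lemma usep_B_verts (S₁ S₂ : Separation G) :
    (usep S₁ S₂).B.verts = S₁.B.verts ∩ S₂.B.verts := rfl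

lemma usep_bd_refined (S₁ S₂ : Separation G) :
    bd (usep S₁ S₂) ⊆ (bd S₁ ∩ S₂.B.verts) ∪ (bd S₂ ∩ S₁.B.verts) := by
  rintro u ⟨hA, hB⟩
  rw [usep_B_verts] at hB
  rcases (hA : u ∈ S₁.A.verts ∪ S₂.A.verts) with h | h
  · exact Or.inl ⟨⟨h, hB.1⟩, hB.2⟩
  · exact Or.inr ⟨⟨h, hB.2⟩, hB.1⟩

lemma usep_bd (S₁ S₂ : Separation G) : bd (usep S₁ S₂) ⊆ bd S₁ ∪ bd S₂ := by
  intro u hu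
  rcases usep_bd_refined S₁ S₂ hu with h | h
  · exact Or.inl h.1
  · exact Or.inr h.1

lemma usep_mem (T : Tangle G θ) {S₁ S₂ : Separation G}
    (h₁ : S₁ ∈ T.mem) (h₂ : S₂ ∈ T.mem) (hord : (usep S₁ S₂).order < θ) :
    usep S₁ S₂ ∈ T.mem := by
  apply mem_of_cover T h₁ h₂ _ hord
  show S₁.A ⊔ S₂.A ⊔ (S₁.B ⊓ S₂.B) = ⊤
  apply SimpleGraph.Subgraph.ext
  · apply Set.eq_univ_of_forall
    intro x
    rcases verts_cover S₁ x with h | h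
    · exact Or.inl (Or.inl h)
    rcases verts_cover S₂ x with h' | h'
    · exact Or.inl (Or.inr h')
    · exact Or.inr ⟨h, h'⟩
  · funext a b
    apply propext
    constructor
    · rintro ((h | h) | h)
      · exact SimpleGraph.Subgraph.top_adj.mpr (S₁.A.adj_sub h)
      · exact SimpleGraph.Subgraph.top_adj.mpr (S₂.A.adj_sub h)
      · exact SimpleGraph.Subgraph.top_adj.mpr (S₁.B.adj_sub (SimpleGraph.Subgraph.inf_adj.mp h).1)
    · intro h
      have hab := SimpleGraph.Subgraph.top_adj.mp h
      rcases adj_cover S₁ hab with h' | h'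
      · exact Or.inl (Or.inl h')
      rcases adj_cover S₂ hab with h'' | h''
      · exact Or.inl (Or.inr h'')
      · exact Or.inr (SimpleGraph.Subgraph.inf_adj.mpr ⟨h', h''⟩)

end NexusAux

namespace NexusAux

open SimpleGraph

variable {V : Type*} [Fintype V] {G : SimpleGraph V} {θ : ℕ}

instance : Finite (G.Subgraph) := by
  classical
  exact Finite.of_injective (fun H => (H.verts, H.Adj))
    (by rintro ⟨⟩ ⟨⟩ h; simp only [Prod.mk.injEq] at h; exact SimpleGraph.Subgraph.ext h.1 h.2)

instance : Finite (Separation G) :=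
  Finite.of_injective (fun S => (S.A, S.B))
    (by rintro ⟨⟩ ⟨⟩ h; simp only [Prod.mk.injEq] at h; cases h.1; cases h.2; rfl)

/-- Relative rank statement: `Y` has rank at most `m` relative to the tangle
restricted by `X`. -/
def RR (T : Tangle G θ) (X Y : Set V) (m : ℕ) : Prop :=
  θ ≤ X.ncard + m ∨
    ∃ S ∈ T.mem, X ⊆ bd S ∧ Y ⊆ S.A.verts ∧ S.order ≤ X.ncard + m

/-- Folding unions of a list of separations. -/
lemma fold_union (T : Tangle G θ) :
    ∀ (L : List (Separation G)), L ≠ [] → (∀ S ∈ L, S ∈ T.mem) →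
    (⋃ S ∈ L, bd S).ncard < θ →
    ∃ U ∈ T.mem, (∀ S ∈ L, S.A.verts ⊆ U.A.verts) ∧
      bd U ⊆ (⋃ S ∈ L, bd S) ∧ (∀ x, (∀ S ∈ L, x ∈ S.B.verts) → x ∈ U.B.verts) := by
  intro L
  induction L with
  | nil => intro h; exact absurd rfl h
  | cons S L' ih =>
    intro _ hmem hord
    by_cases hL' : L' = []
    · subst hL'
      refine ⟨S, hmem S (by simp), ?_, ?_, ?_⟩
      · intro S' hS'; simp at hS'; subst hS'; exact subset_rfl
      · intro x hx; simp; exact hx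
      · intro x hx; exact hx S (by simp)
    · have hord' : (⋃ S ∈ L', bd S).ncard < θ := by
        refine lt_of_le_of_lt (Set.ncard_le_ncard ?_ (Set.toFinite _)) hord
        intro x hx
        simp only [Set.mem_iUnion] at hx ⊢
        obtain ⟨S', hS', hx⟩ := hx
        exact ⟨S', List.mem_cons_of_mem _ hS', hx⟩
      obtain ⟨U', hU'mem, hU'A, hU'bd, hU'B⟩ :=
        ih hL' (fun S' hS' => hmem S' (List.mem_cons_of_mem _ hS')) hord'
      refine ⟨usep S U', ?_, ?_, ?_, ?_⟩
      · apply usep_mem T (hmem S (by simp)) hU'mem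
        rw [order_eq_bd]
        refine lt_of_le_of_lt (Set.ncard_le_ncard ?_ (Set.toFinite _)) hord
        intro x hx
        rcases usep_bd S U' hx with h | h
        · simp only [Set.mem_iUnion]; exact ⟨S, by simp, h⟩
        · have := hU'bd h
          simp only [Set.mem_iUnion] at this ⊢
          obtain ⟨S', hS', hx'⟩ := this
          exact ⟨S', List.mem_cons_of_mem _ hS', hx'⟩
      · intro S' hS'
        rcases List.mem_cons.mp hS' with h | h
        · subst h; rw [usep_A_verts]; exact Set.subset_union_left
        · exact (hU'A S' h).trans (by rw [usep_A_verts]; exact Set.subset_union_right)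
      · intro x hx
        rcases usep_bd S U' hx with h | h
        · simp only [Set.mem_iUnion]; exact ⟨S, by simp, h⟩
        · have := hU'bd h
          simp only [Set.mem_iUnion] at this ⊢
          obtain ⟨S', hS', hx'⟩ := this
          exact ⟨S', List.mem_cons_of_mem _ hS', hx'⟩
      · intro x hx
        rw [usep_B_verts]
        exact ⟨hx S (by simp), hU'B x (fun S' hS' => hx S' (List.mem_cons_of_mem _ hS'))⟩

end NexusAux

namespace NexusAux

open SimpleGraph

variable {V : Type*} [Fintype V] {G : SimpleGraph V} {θ : ℕ}

/-- The graph on the vertices of a subgraph avoiding `X`. -/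
def hgraph (A : G.Subgraph) (X : Set V) : SimpleGraph V where
  Adj a b := A.Adj a b ∧ a ∉ X ∧ b ∉ X
  symm := ⟨fun a b h => ⟨A.adj_symm h.1, h.2.2, h.2.1⟩⟩
  loopless := ⟨fun a h => G.loopless.irrefl a (A.adj_sub h.1)⟩

lemma hgraph_mono {A A' : G.Subgraph} (h : A ≤ A') (X : Set V) :
    hgraph A X ≤ hgraph A' X := by
  intro a b ha
  exact ⟨h.2 ha.1, ha.2.1, ha.2.2⟩

/-- Connectivity property of the `A`-side. -/
def connprop (A : G.Subgraph) (X : Set V) (w : V) : Prop :=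
  ∀ a ∈ A.verts \ X, (hgraph A X).Reachable w a

lemma hg_walk_end {A : G.Subgraph} {X : Set V} {u a : V}
    (hu : u ∈ A.verts \ X) (p : (hgraph A X).Walk u a) : a ∈ A.verts \ X := by
  induction p with
  | nil => exact hu
  | cons h p ih => exact ih ⟨A.edge_vert (A.adj_symm h.1), h.2.2⟩

/-- Reachable set from `w` in the `A'`-side avoiding `X`. -/
def Cset (S' : Separation G) (X : Set V) (w : V) : Set V :=
  {a | (hgraph S'.A X).Reachable w a}

lemma w_mem_Cset (S' : Separation G) (X : Set V) (w : V) : w ∈ Cset S' X w :=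
  Reachable.refl w

lemma Cset_sub {S' : Separation G} {X : Set V} {w : V}
    (hw : w ∈ S'.A.verts) (hwX : w ∉ X) : Cset S' X w ⊆ S'.A.verts \ X := by
  intro a ha
  obtain ⟨p⟩ := ha
  exact hg_walk_end ⟨hw, hwX⟩ p

lemma Cset_closure {S' : Separation G} {X : Set V} {w : V} {a b : V}
    (ha : a ∈ Cset S' X w) (hw : w ∈ S'.A.verts) (hwX : w ∉ X)
    (hab : S'.A.Adj a b) (hb : b ∉ X) : b ∈ Cset S' X w := by
  have haX := (Cset_sub hw hwX ha).2
  exact Reachable.trans ha (SimpleGraph.Adj.reachable ⟨hab, haX, hb⟩)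

/-- The `A`-side of the pruned separation. -/
def hatA (S' : Separation G) (X : Set V) (w : V) : G.Subgraph where
  verts := Cset S' X w ∪ X
  Adj a b := S'.A.Adj a b ∧ (a ∈ Cset S' X w ∪ X) ∧ (b ∈ Cset S' X w ∪ X)
  adj_sub h := S'.A.adj_sub h.1
  edge_vert h := h.2.1
  symm := ⟨fun a b h => ⟨S'.A.adj_symm h.1, h.2.2, h.2.1⟩⟩

/-- Connectivity of the pruned `A`-side. -/
lemma hatA_reach_aux {S' : Separation G} {X : Set V} {w : V}
    (hw : w ∈ S'.A.verts) (hwX : w ∉ X) :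
    ∀ {u a : V}, u ∈ Cset S' X w → (hgraph S'.A X).Walk u a →
      (hgraph (hatA S' X w) X).Reachable u a := by
  intro u a hu p
  induction p with
  | nil => exact Reachable.refl _
  | @cons u b a h p ih =>
    have hb : b ∈ Cset S' X w := Reachable.trans hu (SimpleGraph.Adj.reachable h)
    have hadj : (hgraph (hatA S' X w) X).Adj u b :=
      ⟨⟨h.1, Or.inl hu, Or.inl hb⟩, h.2.1, h.2.2⟩
    exact Reachable.trans (SimpleGraph.Adj.reachable hadj) (ih hb)

lemma hatA_conn {S' : Separation G} {X : Set V} {w : V}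
    (hw : w ∈ S'.A.verts) (hwX : w ∉ X) :
    connprop (hatA S' X w) X w := by
  rintro a ⟨ha, haX⟩
  rcases (ha : a ∈ Cset S' X w ∪ X) with h | h
  · obtain ⟨p⟩ := (h : (hgraph S'.A X).Reachable w a)
    exact hatA_reach_aux hw hwX (w_mem_Cset S' X w) p
  · exact absurd h haX

/-- The pruned separation. -/
lemma prune (T : Tangle G θ) (S' : Separation G) (hS' : S' ∈ T.mem) (X : Set V) (w : V)
    (hw : w ∈ S'.A.verts) (hwX : w ∉ X) (hX : X ⊆ bd S') (hord : S'.order < θ) :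
    ∃ Sh ∈ T.mem, Sh.A = hatA S' X w ∧
      bd Sh ⊆ X ∪ (Cset S' X w ∩ bd S') ∧ X ⊆ bd Sh ∧
      S'.B.verts ⊆ Sh.B.verts ∧
      Sh.B.verts ⊆ S'.B.verts ∪ (S'.A.verts \ Cset S' X w) := by
  classical
  set C := Cset S' X w with hC
  -- B-side
  have edge_vert_B : ∀ {a b : V},
      (S'.B.Adj a b ∨ (S'.A.Adj a b ∧ ¬(a ∈ C ∪ X ∧ b ∈ C ∪ X))) →
      a ∈ S'.B.verts ∪ (S'.A.verts \ C) := by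
    rintro a b (h | ⟨h1, h2⟩)
    · exact Or.inl (S'.B.edge_vert h)
    · refine Or.inr ⟨S'.A.edge_vert h1, ?_⟩
      intro haC
      apply h2
      refine ⟨Or.inl haC, ?_⟩
      by_cases hbX : b ∈ X
      · exact Or.inr hbX
      · exact Or.inl (Cset_closure haC hw hwX h1 hbX)
  let Bh : G.Subgraph :=
    { verts := S'.B.verts ∪ (S'.A.verts \ C)
      Adj := fun a b => S'.B.Adj a b ∨ (S'.A.Adj a b ∧ ¬(a ∈ C ∪ X ∧ b ∈ C ∪ X))
      adj_sub := fun h => by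
        rcases h with h | h
        · exact S'.B.adj_sub h
        · exact S'.A.adj_sub h.1
      edge_vert := fun h => edge_vert_B h
      symm := ⟨fun a b h => by
        rcases h with h | ⟨h1, h2⟩
        · exact Or.inl (S'.B.adj_symm h)
        · exact Or.inr ⟨S'.A.adj_symm h1, fun hc => h2 ⟨hc.2, hc.1⟩⟩⟩ }
  have hv : ∀ x, x ∈ (hatA S' X w).verts ∨ x ∈ Bh.verts := by
    intro x
    by_cases hxA : x ∈ S'.A.verts
    · by_cases hxC : x ∈ C
      · exact Or.inl (Or.inl hxC)
      · exact Or.inr (Or.inr ⟨hxA, hxC⟩)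
    · rcases verts_cover S' x with h | h
      · exact absurd h hxA
      · exact Or.inr (Or.inl h)
  have he : ∀ a b, G.Adj a b → (hatA S' X w).Adj a b ∨ Bh.Adj a b := by
    intro a b hab
    rcases adj_cover S' hab with h | h
    · by_cases hc : a ∈ C ∪ X ∧ b ∈ C ∪ X
      · exact Or.inl ⟨h, hc.1, hc.2⟩
      · exact Or.inr (Or.inr ⟨h, hc⟩)
    · exact Or.inr (Or.inl h)
  have hd : ∀ a b, (hatA S' X w).Adj a b → Bh.Adj a b → False := by
    intro a b hA hB
    rcases hB with h | h
    · exact not_both_adj S' hA.1 h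
    · exact h.2 ⟨hA.2.1, hA.2.2⟩
  refine ⟨mkSep (hatA S' X w) Bh hv he hd, ?_, rfl, ?_, ?_, ?_, ?_⟩
  · -- membership
    apply mem_of_cover T hS' hS'
    · apply SimpleGraph.Subgraph.ext
      · rw [SimpleGraph.Subgraph.verts_sup, SimpleGraph.Subgraph.verts_sup]
        apply Set.eq_univ_of_forall
        intro x
        rcases verts_cover S' x with h | h
        · exact Or.inl (Or.inl h)
        · exact Or.inr (Or.inl h)
      · funext a b
        apply propext
        constructor
        · rintro ((h | h) | h)
          · exact SimpleGraph.Subgraph.top_adj.mpr (S'.A.adj_sub h)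
          · exact SimpleGraph.Subgraph.top_adj.mpr (S'.A.adj_sub h)
          · rcases h with h | h
            · exact SimpleGraph.Subgraph.top_adj.mpr (S'.B.adj_sub h)
            · exact SimpleGraph.Subgraph.top_adj.mpr (S'.A.adj_sub h.1)
        · intro h
          have hab := SimpleGraph.Subgraph.top_adj.mp h
          rcases he a b hab with h' | h'
          · exact Or.inl (Or.inl h'.1)
          · exact Or.inr h'
    · -- order < θ : bd ⊆ bd S' basically
      rw [order_eq_bd]
      refine lt_of_le_of_lt (Set.ncard_le_ncard ?_ (Set.toFinite _)) hord
      rintro u ⟨huA, huB⟩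
      rcases (huA : u ∈ C ∪ X) with h | h
      · rcases (huB : u ∈ S'.B.verts ∪ (S'.A.verts \ C)) with h' | h'
        · exact ⟨(Cset_sub hw hwX h).1, h'⟩
        · exact absurd h h'.2
      · exact hX h
  · -- bd ⊆ X ∪ (C ∩ bd S')
    rintro u ⟨huA, huB⟩
    rcases (huA : u ∈ C ∪ X) with h | h
    · rcases (huB : u ∈ S'.B.verts ∪ (S'.A.verts \ C)) with h' | h'
      · exact Or.inr ⟨h, (Cset_sub hw hwX h).1, h'⟩
      · exact absurd h h'.2
    · exact Or.inl h
  · -- X ⊆ bd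
    intro x hx
    exact ⟨Or.inr hx, Or.inl (hX hx).2⟩
  · exact fun x hx => Or.inl hx
  · exact fun x hx => hx

/-- Walks staying inside the `A'`-side away from `X` remain in `C`. -/
lemma walk_stays {S' : Separation G} {X : Set V} {w : V}
    (hw : w ∈ S'.A.verts) (hwX : w ∉ X)
    (hcond : Cset S' X w ∩ bd S' ⊆ X) :
    ∀ {u a : V} (p : G.Walk u a), u ∈ Cset S' X w →
      (∀ c ∈ p.support, c ∈ S'.A.verts ∧ c ∉ X) → a ∈ Cset S' X w := by
  intro u a p
  induction p with
  | nil => exact fun hu _ => hu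
  | @cons u b a h p ih =>
    intro hu hsupp
    have hbA : b ∈ S'.A.verts ∧ b ∉ X := hsupp b (by simp)
    have hb : b ∈ Cset S' X w := by
      rcases adj_cover S' h with h' | h'
      · exact Cset_closure hu hw hwX h' hbA.2
      · exfalso
        have huA : u ∈ S'.A.verts ∧ u ∉ X := hsupp u (by simp)
        have : u ∈ Cset S' X w ∩ bd S' := ⟨hu, huA.1, S'.B.edge_vert h'⟩
        exact huA.2 (hcond this)
    exact ih hb (fun c hc => hsupp c (by simp [hc]))

/-- Finding the exit vertex of a walk. -/
lemma seg (A : Set V) : ∀ {a b : V} (q : G.Walk a b), a ∉ A → b ∈ A →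
    ∃ (x z : V) (r : G.Walk x a), x ∉ A ∧ z ∈ A ∧ G.Adj z x ∧ z ∈ q.support ∧
      ∀ c ∈ r.support, c ∈ q.support ∧ c ∉ A := by
  intro a b q
  induction q with
  | nil => intro h h'; exact absurd h' h
  | @cons a c b h q ih =>
    intro ha hb
    by_cases hc : c ∈ A
    · refine ⟨a, c, SimpleGraph.Walk.nil, ha, hc, h.symm, by simp, ?_⟩
      intro u hu
      simp only [SimpleGraph.Walk.support_nil, List.mem_singleton] at hu
      subst hu
      exact ⟨by simp, ha⟩
    · obtain ⟨x, z, r, hx, hz, hzx, hzsupp, hrsupp⟩ := ih hc hb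
      refine ⟨x, z, r.concat h.symm, hx, hz, hzx, by simp [hzsupp], ?_⟩
      intro u hu
      rw [SimpleGraph.Walk.support_concat, List.mem_append] at hu
      rcases hu with hu | hu
      · exact ⟨by simp [(hrsupp u hu).1], (hrsupp u hu).2⟩
      · simp only [List.mem_singleton] at hu
        subst hu
        exact ⟨by simp, ha⟩

/-- Counting neighbours of a set. -/
lemma nbr_count (d' : ℕ) (hdeg : ∀ x : V, (G.neighborSet x).ncard ≤ d') (Z : Set V) :
    {x | ∃ z ∈ Z, G.Adj z x}.ncard ≤ Z.ncard * d' := by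
  classical
  have hsub : {x | ∃ z ∈ Z, G.Adj z x} ⊆ ⋃ z ∈ Z, G.neighborSet z := by
    rintro x ⟨z, hz, hadj⟩
    exact Set.mem_biUnion hz hadj
  have key : ∀ (s : Finset V), (⋃ z ∈ (s : Set V), G.neighborSet z).ncard ≤ s.card * d' := by
    intro s
    induction s using Finset.induction_on with
    | empty => simp
    | @insert a s ha ih =>
      rw [Finset.coe_insert, Set.biUnion_insert]
      refine le_trans (Set.ncard_union_le _ _) ?_
      rw [Finset.card_insert_of_notMem ha]
      calc (G.neighborSet a).ncard + (⋃ z ∈ (s : Set V), G.neighborSet z).ncard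
          ≤ d' + s.card * d' := Nat.add_le_add (hdeg a) ih
        _ = (s.card + 1) * d' := by ring
  calc {x | ∃ z ∈ Z, G.Adj z x}.ncard ≤ (⋃ z ∈ (Z.toFinset : Set V), G.neighborSet z).ncard := by
        apply Set.ncard_le_ncard _ (Set.toFinite _)
        simpa using hsub
    _ ≤ Z.toFinset.card * d' := key _
    _ = Z.ncard * d' := by rw [Set.ncard_eq_toFinset_card']

end NexusAux

namespace NexusAux

open SimpleGraph

variable {V : Type*} [Fintype V] {G : SimpleGraph V} {θ : ℕ}

/-- The recursive bound function. -/
def gfun (d' : ℕ) : ℕ → ℕ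
  | 0 => 0
  | (n+1) => (n+1) + (n+1) * d' * gfun d' n

omit [Fintype V] in
lemma gfun_ge (d' k : ℕ) : k ≤ gfun d' k := by
  cases k with
  | zero => simp [gfun]
  | succ n => exact Nat.le_add_right _ _

omit [Fintype V] in
lemma gfun_le (d' : ℕ) (hd' : 1 ≤ d') : ∀ k, gfun d' k ≤ (k * d') ^ k := by
  intro k
  induction k with
  | zero => simp [gfun]
  | succ n ih =>
    show (n+1) + (n+1) * d' * gfun d' n ≤ ((n+1) * d') ^ (n+1)
    cases n with
    | zero =>
      have : gfun d' 0 = 0 := rfl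
      rw [this]
      have : (1 * d') ^ 1 = d' := by ring
      rw [this]
      omega
    | succ m =>
      set n := m + 1 with hn'
      have hlt : n * d' < (n+1) * d' := by nlinarith
      have h1 : (n * d') ^ n + 1 ≤ ((n+1) * d') ^ n := Nat.pow_lt_pow_left hlt (by omega)
      calc (n+1) + (n+1) * d' * gfun d' n
          ≤ (n+1) * d' + (n+1) * d' * (n * d') ^ n := by
            have e1 : (n+1) * 1 ≤ (n+1) * d' := Nat.mul_le_mul_left _ hd'
            have e2 : (n+1) * d' * gfun d' n ≤ (n+1) * d' * (n * d') ^ n :=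
              Nat.mul_le_mul_left _ ih
            omega
        _ = (n+1) * d' * ((n * d') ^ n + 1) := by ring
        _ ≤ (n+1) * d' * ((n+1) * d') ^ n := Nat.mul_le_mul_left _ h1
        _ = ((n+1) * d') ^ (n+1) := by ring
  -- end

/-- Edgeless graphs with `|V| < ∞` admit no tangle of order `≥ 2`. -/
lemma edgeless_no_tangle (T : Tangle G θ) (hθ : 2 ≤ θ) (hE : ∀ a b : V, ¬G.Adj a b) :
    False := by
  classical
  let esep : Set V → Separation G := fun W =>
    mkSep (vsub G W) (vsub G Wᶜ)
      (fun x => (Classical.em (x ∈ W)).imp (fun h => h) (fun h => h))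
      (fun a b h => absurd h (hE a b))
      (fun a b h => h.elim)
  have horder : ∀ W : Set V, (esep W).order = 0 := by
    intro W
    simp [esep, Separation.order, mkSep, vsub]
  have key : ∀ s : Finset V, esep (↑s) ∈ T.mem := by
    intro s
    induction s using Finset.induction_on with
    | empty =>
      rcases T.oriented (esep (↑(∅ : Finset V))) (by rw [horder]; omega) with h | h
      · exact h
      · exfalso
        apply T.small _ h
        show ((↑(∅ : Finset V) : Set V)ᶜ) = Set.univ
        simp
    | @insert a s ha ih =>
      rcases T.oriented (esep (↑(insert a s))) (by rw [horder]; omega) with h | h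
      · exact h
      · exfalso
        apply T.not_three _ ih _ h _ (xsep_mem T (by rw [Set.ncard_singleton]; omega :
            ({a} : Set V).ncard < θ))
        apply SimpleGraph.Subgraph.ext
        · rw [SimpleGraph.Subgraph.verts_sup, SimpleGraph.Subgraph.verts_sup]
          apply Set.eq_univ_of_forall
          intro x
          by_cases hx : x ∈ (↑(insert a s) : Set V)
          · rcases Finset.mem_insert.mp (by exact_mod_cast hx) with h' | h'
            · subst h'; exact Or.inr (by simp [xsep, mkSep, vsub])
            · exact Or.inl (Or.inl (by exact_mod_cast h'))
          · exact Or.inl (Or.inr hx)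
        · funext x y
          apply propext
          constructor
          · rintro ((h' | h') | h')
            · exact absurd h' (vsub_adj _ _ _)
            · exact absurd h' (vsub_adj _ _ _)
            · exact absurd h' (vsub_adj _ _ _)
          · intro h'
            exact absurd (SimpleGraph.Subgraph.top_adj.mp h') (hE x y)
  apply T.small _ (key Finset.univ)
  show (↑(Finset.univ : Finset V) : Set V) = Set.univ
  simp

end NexusAux

namespace NexusAux

open SimpleGraph

variable {V : Type*} [Fintype V] {G : SimpleGraph V} {θ : ℕ}

/-- The separation covering the part of `S'.A` outside `S₀.A`, relative to `bd S₀`. -/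
lemma outer (T : Tangle G θ) (S0 S' : Separation G) (h0 : S0 ∈ T.mem) (h' : S' ∈ T.mem)
    (hord : (bd S0).ncard + ((bd S') \ S0.A.verts).ncard < θ) :
    ∃ Tq ∈ T.mem, bd S0 ⊆ bd Tq ∧
      {u | u ∈ S'.A.verts ∧ u ∉ S0.A.verts} ⊆ Tq.A.verts ∧
      Tq.order ≤ (bd S0).ncard + ((bd S') \ S0.A.verts).ncard := by
  let Tq : Separation G :=
    mkSep ((S'.A ⊓ S0.B) ⊔ vsub G (bd S0)) (S'.B ⊔ S0.A)
      (by
        intro x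
        by_cases hB' : x ∈ S'.B.verts
        · exact Or.inr (Or.inl hB')
        by_cases hA0 : x ∈ S0.A.verts
        · exact Or.inr (Or.inr hA0)
        have hA' : x ∈ S'.A.verts := (verts_cover S' x).resolve_right hB'
        have hB0 : x ∈ S0.B.verts := (verts_cover S0 x).resolve_left hA0
        exact Or.inl (Or.inl ⟨hA', hB0⟩))
      (by
        intro a b hab
        rcases adj_cover S' hab with h | h
        · rcases adj_cover S0 hab with h2 | h2
          · exact Or.inr (SimpleGraph.Subgraph.sup_adj.mpr (Or.inr h2))
          · exact Or.inl (SimpleGraph.Subgraph.sup_adj.mpr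
              (Or.inl (SimpleGraph.Subgraph.inf_adj.mpr ⟨h, h2⟩)))
        · exact Or.inr (SimpleGraph.Subgraph.sup_adj.mpr (Or.inl h)))
      (by
        intro a b hA hB
        rcases SimpleGraph.Subgraph.sup_adj.mp hA with h | h
        · have h' := SimpleGraph.Subgraph.inf_adj.mp h
          rcases SimpleGraph.Subgraph.sup_adj.mp hB with h2 | h2
          · exact not_both_adj S' h'.1 h2
          · exact not_both_adj S0 h2 h'.2
        · exact vsub_adj _ _ _ h)
  have hbd : bd Tq ⊆ bd S0 ∪ ((bd S') \ S0.A.verts) := by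
    rintro u ⟨huA, huB⟩
    rcases (huA : u ∈ (S'.A.verts ∩ S0.B.verts) ∪ bd S0) with h | h
    · rcases (huB : u ∈ S'.B.verts ∪ S0.A.verts) with h2 | h2
      · by_cases hA0 : u ∈ S0.A.verts
        · exact Or.inl ⟨hA0, h.2⟩
        · exact Or.inr ⟨⟨h.1, h2⟩, hA0⟩
      · exact Or.inl ⟨h2, h.2⟩
    · exact Or.inl h
  refine ⟨Tq, ?_, ?_, ?_, ?_⟩
  · apply mem_of_cover T h0 h'
    · apply SimpleGraph.Subgraph.ext
      · rw [SimpleGraph.Subgraph.verts_sup, SimpleGraph.Subgraph.verts_sup]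
        apply Set.eq_univ_of_forall
        intro x
        rcases verts_cover S' x with h | h
        · exact Or.inl (Or.inr h)
        · exact Or.inr (Or.inl h)
      · funext a b
        apply propext
        constructor
        · rintro ((h | h) | h)
          · exact SimpleGraph.Subgraph.top_adj.mpr (S0.A.adj_sub h)
          · exact SimpleGraph.Subgraph.top_adj.mpr (S'.A.adj_sub h)
          · rcases SimpleGraph.Subgraph.sup_adj.mp h with h2 | h2
            · exact SimpleGraph.Subgraph.top_adj.mpr (S'.B.adj_sub h2)
            · exact SimpleGraph.Subgraph.top_adj.mpr (S0.A.adj_sub h2)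
        · intro h
          have hab := SimpleGraph.Subgraph.top_adj.mp h
          rcases adj_cover S' hab with h' | h'
          · exact Or.inl (Or.inr h')
          · exact Or.inr (SimpleGraph.Subgraph.sup_adj.mpr (Or.inl h'))
    · rw [order_eq_bd]
      exact lt_of_le_of_lt (le_trans (Set.ncard_le_ncard hbd (Set.toFinite _))
        (Set.ncard_union_le _ _)) hord
  · intro u hu
    refine ⟨Or.inr hu, Or.inr hu.1⟩
  · rintro u ⟨huA, huA0⟩
    have huB0 : u ∈ S0.B.verts := (verts_cover S0 u).resolve_left huA0
    exact Or.inl ⟨huA, huB0⟩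
  · rw [order_eq_bd]
    exact le_trans (Set.ncard_le_ncard hbd (Set.toFinite _)) (Set.ncard_union_le _ _)

/-- Bounded union of boundaries. -/
lemma ncard_biUnion_le_finset (s : Finset V) (t : V → Set V) (m : ℕ)
    (h : ∀ x ∈ s, (t x).ncard ≤ m) :
    (⋃ x ∈ (s : Set V), t x).ncard ≤ s.card * m := by
  classical
  induction s using Finset.induction_on with
  | empty => simp
  | @insert a s ha ih =>
    rw [Finset.coe_insert, Set.biUnion_insert]
    refine le_trans (Set.ncard_union_le _ _) ?_
    rw [Finset.card_insert_of_notMem ha]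
    have h1 := h a (Finset.mem_insert_self a s)
    have h2 := ih (fun x hx => h x (Finset.mem_insert_of_mem hx))
    calc (t a).ncard + (⋃ x ∈ (s : Set V), t x).ncard ≤ m + s.card * m :=
          Nat.add_le_add h1 h2
      _ = (s.card + 1) * m := by ring

end NexusAux

namespace NexusAux

open SimpleGraph

variable {V : Type*} [Fintype V] {G : SimpleGraph V} {θ : ℕ}

omit [Fintype V] in
lemma gfun_ge2 (d' n : ℕ) (hd' : 1 ≤ d') : n + (n+1) ≤ gfun d' (n+1) := by
  show n + (n+1) ≤ (n+1) + (n+1) * d' * gfun d' n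
  have h1 := gfun_ge d' n
  have h2 : gfun d' n ≤ (n+1) * d' * gfun d' n :=
    Nat.le_mul_of_pos_left _ (Nat.mul_pos (Nat.succ_pos n) hd')
  omega

lemma core (T : Tangle G θ) (d' : ℕ) (hd' : 1 ≤ d')
    (hdeg : ∀ x : V, (G.neighborSet x).ncard ≤ d') :
    ∀ (k : ℕ) (X : Set V) (w : V) (Q : Set ((u : V) × G.Walk w u)),
      (k+1)^2 + X.ncard ≤ θ →
      (∀ q ∈ Q, ∀ a ∈ q.2.support, a ∉ X) →
      (∀ q ∈ Q, RR T X {a | a ∈ q.2.support} k) →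
      RR T X (⋃ q ∈ Q, {a | a ∈ q.2.support}) (gfun d' k) := by
  intro k
  induction k with
  | zero =>
    intro X w Q harith havoid hrr
    by_cases htriv : θ ≤ X.ncard + gfun d' 0
    · exact Or.inl htriv
    push_neg at htriv
    have hg0 : gfun d' 0 = 0 := rfl
    have hXlt : X.ncard < θ := by omega
    classical
    let AA : Set (Separation G) := {S | S ∈ T.mem ∧ X ⊆ bd S ∧ S.order ≤ X.ncard}
    let L : List (Separation G) := xsep G X :: (Set.toFinite AA).toFinset.toList
    have hmemAA : ∀ S ∈ AA, bd S = X := by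
      intro S hS
      exact (Set.eq_of_subset_of_ncard_le hS.2.1 hS.2.2 (Set.toFinite _)).symm
    have hmemL : ∀ S ∈ L, S ∈ T.mem := by
      intro S hS
      rcases List.mem_cons.mp hS with h | h
      · subst h; exact xsep_mem T hXlt
      · exact ((Set.Finite.mem_toFinset _).mp (Finset.mem_toList.mp h)).1
    have hbdL : ∀ S ∈ L, bd S = X := by
      intro S hS
      rcases List.mem_cons.mp hS with h | h
      · subst h; exact xsep_bd X
      · exact hmemAA S ((Set.Finite.mem_toFinset _).mp (Finset.mem_toList.mp h))
    have hUbd : (⋃ S ∈ L, bd S) ⊆ X := by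
      intro x hx
      simp only [Set.mem_iUnion] at hx
      obtain ⟨S, hS, hx⟩ := hx
      rw [hbdL S hS] at hx
      exact hx
    obtain ⟨U, hUmem, hUA, hUbd2, hUB⟩ := fold_union T L (by simp [L])
      hmemL (lt_of_le_of_lt (Set.ncard_le_ncard hUbd (Set.toFinite _)) hXlt)
    refine Or.inr ⟨U, hUmem, ?_, ?_, ?_⟩
    · intro x hx
      refine ⟨?_, ?_⟩
      · exact hUA (xsep G X) (by simp [L]) hx
      · apply hUB
        intro S hS
        rw [← hbdL S hS] at hx
        exact hx.2
    · intro a ha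
      simp only [Set.mem_iUnion] at ha
      obtain ⟨q, hq, ha⟩ := ha
      rcases hrr q hq with h | h
      · exfalso; omega
      · obtain ⟨S, hSmem, hSX, hSsupp, hSord⟩ := h
        have hSAA : S ∈ AA := ⟨hSmem, hSX, by omega⟩
        have hSL : S ∈ L := List.mem_cons_of_mem _
          (Finset.mem_toList.mpr ((Set.Finite.mem_toFinset _).mpr hSAA))
        exact hUA S hSL (hSsupp ha)
    · rw [order_eq_bd]
      have hsub : bd U ⊆ X := fun x hx => hUbd (hUbd2 hx)
      have := Set.ncard_le_ncard hsub (Set.toFinite _)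
      omega
  | succ n ih =>
    intro X w Q harith havoid hrr
    classical
    by_cases htriv : θ ≤ X.ncard + gfun d' (n+1)
    · exact Or.inl htriv
    push_neg at htriv
    have hgk : gfun d' (n+1) = (n+1) + (n+1) * d' * gfun d' n := rfl
    have hge1 : n + 1 ≤ gfun d' (n+1) := gfun_ge d' (n+1)
    have hge2 : n + (n+1) ≤ gfun d' (n+1) := gfun_ge2 d' n hd'
    have hXlt : X.ncard < θ := by omega
    have hXk : X.ncard + (n+1) < θ := by omega
    by_cases hQ : Q = ∅
    · subst hQ
      refine Or.inr ⟨xsep G X, xsep_mem T hXlt, ?_, ?_, ?_⟩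
      · rw [xsep_bd]
      · simp
      · rw [xsep_order]; exact Nat.le_add_right _ _
    obtain ⟨q₀, hq₀⟩ := Set.nonempty_iff_ne_empty.mpr hQ
    have hwX : w ∉ X := havoid q₀ hq₀ w q₀.2.start_mem_support
    have hsep : ∀ q ∈ Q, ∃ S, S ∈ T.mem ∧ X ⊆ bd S ∧
        {a | a ∈ q.2.support} ⊆ S.A.verts ∧ S.order ≤ X.ncard + (n+1) := by
      intro q hq
      rcases hrr q hq with h | h
      · exfalso; omega
      · obtain ⟨S, h1, h2, h3, h4⟩ := h
        exact ⟨S, h1, h2, h3, h4⟩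
    let SS : Set (Separation G) := {S | S ∈ T.mem ∧ X ⊆ bd S ∧ w ∈ S.A.verts ∧
      S.order ≤ X.ncard + (n+1) ∧ connprop S.A X w}
    have hSSne : SS.Nonempty := by
      refine ⟨xsep G (insert w X), ⟨?_, ?_, ?_, ?_, ?_⟩⟩
      · apply xsep_mem T
        have := Set.ncard_insert_le w X
        omega
      · rw [xsep_bd]; exact Set.subset_insert w X
      · exact Set.mem_insert w X
      · rw [xsep_order]
        have := Set.ncard_insert_le w X
        omega
      · rintro a ⟨ha, haX⟩
        rcases (ha : a ∈ insert w X) with h | h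
        · simpa [h] using Reachable.refl w
        · exact absurd h haX
    obtain ⟨S₀, hS₀, hmax⟩ := Set.Finite.exists_maximalFor
      (fun S : Separation G => S.A.verts) SS (Set.toFinite _) hSSne
    obtain ⟨hS₀mem, hS₀X, hS₀w, hS₀ord, hS₀conn⟩ := hS₀
    rw [order_eq_bd] at hS₀ord
    have hXA0 : X ⊆ S₀.A.verts := fun x hx => (hS₀X hx).1
    have hbd0card : (bd S₀).ncard = X.ncard + (bd S₀ \ X).ncard := by
      have := Set.ncard_diff_add_ncard_of_subset hS₀X (Set.toFinite _)
      omega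
    have hZk : (bd S₀ \ X).ncard ≤ n + 1 := by omega
    -- ============ KEY DICHOTOMY ============
    have key : ∀ q ∈ Q, (∀ a ∈ q.2.support, a ∈ S₀.A.verts) ∨
        (∃ Tq, Tq ∈ T.mem ∧ bd S₀ ⊆ bd Tq ∧
          {a | a ∈ q.2.support ∧ a ∉ S₀.A.verts} ⊆ Tq.A.verts ∧
          Tq.order ≤ (bd S₀).ncard + n) := by
      intro q hq
      obtain ⟨S', hS'mem, hS'X, hS'supp, hS'ord⟩ := hsep q hq
      have hw' : w ∈ S'.A.verts := hS'supp q.2.start_mem_support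
      by_cases hcase : bd S' ∩ S₀.A.verts ⊆ X
      · -- case (ii): the whole path is inside S₀.A
        left
        have hordlt : S'.order < θ := by omega
        obtain ⟨Sh, hShmem, hShA, hShbd, hShX, hShB1, hShB2⟩ :=
          prune T S' hS'mem X w hw' hwX hS'X hordlt
        have hCsub : Cset S' X w ⊆ S'.A.verts \ X := Cset_sub hw' hwX
        have hstep : ∀ {u a : V}, u ∈ Cset S' X w → (hgraph S₀.A X).Walk u a →
            a ∈ Cset S' X w := by
          intro u a hu p
          induction p with
          | nil => exact hu
          | @cons u b a h p ihp =>
            have hb : b ∈ Cset S' X w := by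
              rcases adj_cover S' (S₀.A.adj_sub h.1) with h' | h'
              · exact Cset_closure hu hw' hwX h' h.2.2
              · exfalso
                have huB : u ∈ S'.B.verts := S'.B.edge_vert h'
                have huA0 : u ∈ S₀.A.verts := S₀.A.edge_vert h.1
                exact h.2.1 (hcase ⟨⟨(hCsub hu).1, huB⟩, huA0⟩)
            exact ihp hb
        have hA0C : S₀.A.verts \ X ⊆ Cset S' X w := by
          rintro a ⟨haA, haX⟩
          obtain ⟨p⟩ := hS₀conn a ⟨haA, haX⟩
          exact hstep (w_mem_Cset S' X w) p
        have hZC : bd S₀ \ X ⊆ Cset S' X w := fun z hz => hA0C ⟨hz.1.1, hz.2⟩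
        have hZB : ∀ z ∈ bd S₀ \ X, z ∉ Sh.B.verts := by
          intro z hz hzB
          rcases hShB2 hzB with h | h
          · exact hz.2 (hcase ⟨⟨(hCsub (hZC hz)).1, h⟩, hz.1.1⟩)
          · exact h.2 (hZC hz)
        have hUbd : bd (usep S₀ Sh) ⊆ X ∪ bd S' := by
          intro u hu
          rcases usep_bd_refined S₀ Sh hu with h | h
          · by_cases huX : u ∈ X
            · exact Or.inl huX
            · exact absurd h.2 (hZB u ⟨h.1, huX⟩)
          · rcases hShbd h.1 with h' | h'
            · exact Or.inl h'
            · exact Or.inr h'.2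
        have hUord : (usep S₀ Sh).order ≤ X.ncard + (n+1) := by
          rw [order_eq_bd]
          have h1 : X ∪ bd S' = bd S' := Set.union_eq_self_of_subset_left hS'X
          have h2 : (bd (usep S₀ Sh)).ncard ≤ (X ∪ bd S').ncard :=
            Set.ncard_le_ncard hUbd (Set.toFinite _)
          rw [h1] at h2
          rw [order_eq_bd] at hS'ord
          omega
        have hUmem : usep S₀ Sh ∈ T.mem := usep_mem T hS₀mem hShmem (by omega)
        have hUA : (usep S₀ Sh).A.verts = S₀.A.verts ∪ Sh.A.verts := usep_A_verts _ _
        have hUSS : usep S₀ Sh ∈ SS := by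
          refine ⟨hUmem, ?_, ?_, hUord, ?_⟩
          · intro x hx
            refine ⟨?_, ?_⟩
            · rw [hUA]; exact Or.inl (hXA0 hx)
            · rw [usep_B_verts]
              exact ⟨(hS₀X hx).2, (hShX hx).2⟩
          · rw [hUA]; exact Or.inl hS₀w
          · rintro a ⟨ha, haX⟩
            rw [hUA] at ha
            rcases ha with h | h
            · exact Reachable.mono (hgraph_mono le_sup_left X) (hS₀conn a ⟨h, haX⟩)
            · have h2 : a ∈ (hatA S' X w).verts := by rw [← hShA]; exact h
              have h3 := hatA_conn hw' hwX a ⟨h2, haX⟩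
              have hle : hatA S' X w ≤ S₀.A ⊔ Sh.A := by
                rw [← hShA]; exact le_sup_right
              exact Reachable.mono (hgraph_mono hle X) h3
        have hsub : S₀.A.verts ⊆ (usep S₀ Sh).A.verts := by
          rw [hUA]; exact Set.subset_union_left
        have heq : S₀.A.verts = (usep S₀ Sh).A.verts := le_antisymm hsub (hmax hUSS hsub)
        have hCsubA0 : Cset S' X w ⊆ S₀.A.verts := by
          intro c hc
          have h4 : c ∈ (usep S₀ Sh).A.verts := by
            rw [hUA]
            right
            rw [hShA]
            exact Or.inl hc
          rw [heq]; exact h4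
        have hcond : Cset S' X w ∩ bd S' ⊆ X := by
          rintro c ⟨hc, hcbd⟩
          exact hcase ⟨hcbd, hCsubA0 hc⟩
        intro a ha
        apply hCsubA0
        apply walk_stays hw' hwX hcond (q.2.takeUntil a ha) (w_mem_Cset S' X w)
        intro c hc
        have hcq : c ∈ q.2.support := q.2.support_takeUntil_subset ha hc
        exact ⟨hS'supp hcq, havoid q hq c hcq⟩
      · -- case (i): small boundary outside S₀.A
        right
        rw [Set.not_subset] at hcase
        obtain ⟨u₀, hu₀, hu₀X⟩ := hcase
        have hcount : ((bd S') \ S₀.A.verts).ncard ≤ n := by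
          have h1 : (bd S') \ S₀.A.verts ⊆ ((bd S') \ X) \ {u₀} := by
            rintro u ⟨hu, huA0⟩
            refine ⟨⟨hu, fun hx => huA0 (hXA0 hx)⟩, ?_⟩
            simp only [Set.mem_singleton_iff]
            rintro rfl
            exact huA0 hu₀.2
          have h2 : u₀ ∈ (bd S') \ X := ⟨hu₀.1, hu₀X⟩
          have h3 := Set.ncard_diff_singleton_of_mem h2
          have h4 := Set.ncard_diff_add_ncard_of_subset hS'X (Set.toFinite _)
          rw [order_eq_bd] at hS'ord
          have h6 : (((bd S') \ X) \ {u₀}).ncard ≤ n := by omega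
          exact le_trans (Set.ncard_le_ncard h1 (Set.toFinite _)) h6
        obtain ⟨Tq, hTmem, hTbd0, hTcov, hTord⟩ := outer T S₀ S' hS₀mem hS'mem (by omega)
        refine ⟨Tq, hTmem, hTbd0, ?_, ?_⟩
        · rintro a ⟨ha, ha0⟩
          exact hTcov ⟨hS'supp ha, ha0⟩
        · omega
    -- ============ RECURSION ON RUNS ============
    let NN : Set V := {x | x ∉ S₀.A.verts ∧ ∃ z ∈ bd S₀ \ X, G.Adj z x}
    have hNNcard : NN.ncard ≤ (n+1) * d' := by
      have h1 : NN ⊆ {x | ∃ z ∈ bd S₀ \ X, G.Adj z x} := fun x hx => hx.2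
      calc NN.ncard ≤ {x | ∃ z ∈ bd S₀ \ X, G.Adj z x}.ncard :=
            Set.ncard_le_ncard h1 (Set.toFinite _)
        _ ≤ (bd S₀ \ X).ncard * d' := nbr_count d' hdeg _
        _ ≤ (n+1) * d' := Nat.mul_le_mul_right d' hZk
    let QX : (x : V) → Set ((u : V) × G.Walk x u) := fun x =>
      {r | (∀ a ∈ r.2.support, a ∉ S₀.A.verts) ∧ RR T (bd S₀) {a | a ∈ r.2.support} n}
    have harith' : (n+1)^2 + (bd S₀).ncard ≤ θ := by
      have e : (n+1+1)^2 = (n+1)^2 + (2*n+3) := by ring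
      rw [e] at harith
      omega
    have hX'A0 : bd S₀ ⊆ S₀.A.verts := fun x hx => hx.1
    have hgrec : (bd S₀).ncard + gfun d' n < θ := by
      have hpos : 1 ≤ (n+1) * d' := Nat.mul_pos (Nat.succ_pos n) hd'
      have h1 : 1 * gfun d' n ≤ ((n+1) * d') * gfun d' n :=
        Nat.mul_le_mul_right _ hpos
      rw [one_mul] at h1
      rw [hgk] at htriv
      omega
    have hxSep : ∀ x : V, ∃ Sx : Separation G, x ∈ NN →
        (Sx ∈ T.mem ∧ bd S₀ ⊆ bd Sx ∧ Sx.order ≤ (bd S₀).ncard + gfun d' n ∧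
          ∀ r ∈ QX x, {a | a ∈ r.2.support} ⊆ Sx.A.verts) := by
      intro x
      by_cases hx : x ∈ NN
      · have hres := ih (bd S₀) x (QX x) harith'
          (fun r hr a ha haX' => hr.1 a ha (hX'A0 haX'))
          (fun r hr => hr.2)
        rcases hres with h | h
        · exfalso; omega
        · obtain ⟨Sx, h1, h2, h3, h4⟩ := h
          refine ⟨Sx, fun _ => ⟨h1, h2, h4, ?_⟩⟩
          intro r hr a ha
          apply h3
          simp only [Set.mem_iUnion]
          exact ⟨r, hr, ha⟩
      · exact ⟨botSep G, fun h => absurd h hx⟩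
    choose f hf using hxSep
    have hcover : ∀ q ∈ Q, ∀ a ∈ q.2.support, a ∉ S₀.A.verts →
        ∃ x ∈ NN, a ∈ (f x).A.verts := by
      intro q hq a ha ha0
      rcases key q hq with h | h
      · exact absurd (h a ha) ha0
      obtain ⟨Tq, hTmem, hTbd, hTcov, hTord⟩ := h
      obtain ⟨x, z, r, hx0, hzA, hzx, hzsupp, hrsupp⟩ :=
        seg S₀.A.verts (q.2.takeUntil a ha).reverse ha0 hS₀w
      have hsuppq : ∀ c, c ∈ (q.2.takeUntil a ha).reverse.support → c ∈ q.2.support := by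
        intro c hc
        rw [SimpleGraph.Walk.support_reverse, List.mem_reverse] at hc
        exact q.2.support_takeUntil_subset ha hc
      have hzq : z ∈ q.2.support := hsuppq z hzsupp
      have hzZ : z ∈ bd S₀ \ X := by
        have hzX : z ∉ X := havoid q hq z hzq
        have hzB : z ∈ S₀.B.verts := by
          rcases adj_cover S₀ hzx with h' | h'
          · exact absurd (S₀.A.edge_vert (S₀.A.adj_symm h')) hx0
          · exact S₀.B.edge_vert h'
        exact ⟨⟨hzA, hzB⟩, hzX⟩
      have hxNN : x ∈ NN := ⟨hx0, z, hzZ, hzx⟩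
      have hrQX : (⟨a, r⟩ : (u : V) × G.Walk x u) ∈ QX x := by
        refine ⟨fun c hc => (hrsupp c hc).2, ?_⟩
        refine Or.inr ⟨Tq, hTmem, hTbd, ?_, hTord⟩
        intro c hc
        apply hTcov
        exact ⟨hsuppq c (hrsupp c hc).1, (hrsupp c hc).2⟩
      refine ⟨x, hxNN, ?_⟩
      exact (hf x hxNN).2.2.2 ⟨a, r⟩ hrQX r.end_mem_support
    -- ============ FINAL ASSEMBLY ============
    have hNFcard : (Set.toFinite NN).toFinset.card ≤ (n+1) * d' := by
      rw [← Set.ncard_eq_toFinset_card NN (Set.toFinite NN)]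
      exact hNNcard
    let L : List (Separation G) := S₀ :: (Set.toFinite NN).toFinset.toList.map f
    have hmemL : ∀ S ∈ L, S ∈ T.mem := by
      intro S hS
      rcases List.mem_cons.mp hS with h | h
      · subst h; exact hS₀mem
      · obtain ⟨x, hx, rfl⟩ := List.mem_map.mp h
        have hxNN : x ∈ NN := (Set.Finite.mem_toFinset _).mp (Finset.mem_toList.mp hx)
        exact (hf x hxNN).1
    have hbig : (⋃ S ∈ L, bd S) ⊆
        bd S₀ ∪ (⋃ x ∈ ((Set.toFinite NN).toFinset : Set V), (bd (f x)) \ bd S₀) := by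
      intro u hu
      simp only [Set.mem_iUnion] at hu
      obtain ⟨S, hS, hu⟩ := hu
      rcases List.mem_cons.mp hS with h | h
      · subst h; exact Or.inl hu
      · obtain ⟨x, hx, rfl⟩ := List.mem_map.mp h
        by_cases huX : u ∈ bd S₀
        · exact Or.inl huX
        · right
          simp only [Set.mem_iUnion]
          exact ⟨x, Finset.mem_toList.mp hx, hu, huX⟩
    have hbigcard : (⋃ S ∈ L, bd S).ncard ≤ X.ncard + gfun d' (n+1) := by
      have h1 : ∀ x ∈ (Set.toFinite NN).toFinset, ((bd (f x)) \ bd S₀).ncard ≤ gfun d' n := by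
        intro x hx
        have hxNN : x ∈ NN := (Set.Finite.mem_toFinset _).mp hx
        obtain ⟨_, hfX, hford, _⟩ := hf x hxNN
        have h5 := Set.ncard_diff_add_ncard_of_subset hfX (Set.toFinite _)
        rw [order_eq_bd] at hford
        omega
      have h2 : (⋃ x ∈ ((Set.toFinite NN).toFinset : Set V), (bd (f x)) \ bd S₀).ncard ≤
          (Set.toFinite NN).toFinset.card * gfun d' n :=
        ncard_biUnion_le_finset (Set.toFinite NN).toFinset
          (fun x => (bd (f x)) \ bd S₀) (gfun d' n) h1
      have h3 : ((Set.toFinite NN).toFinset.card : ℕ) * gfun d' n ≤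
          ((n+1) * d') * gfun d' n := Nat.mul_le_mul_right _ hNFcard
      have h4 : (⋃ S ∈ L, bd S).ncard ≤
          (bd S₀).ncard +
            (⋃ x ∈ ((Set.toFinite NN).toFinset : Set V), (bd (f x)) \ bd S₀).ncard :=
        le_trans (Set.ncard_le_ncard hbig (Set.toFinite _)) (Set.ncard_union_le _ _)
      rw [hgk]
      omega
    obtain ⟨U, hUmem, hUA, hUbd2, hUB⟩ := fold_union T L (by simp [L]) hmemL
      (lt_of_le_of_lt hbigcard htriv)
    refine Or.inr ⟨U, hUmem, ?_, ?_, ?_⟩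
    · intro x hx
      refine ⟨hUA S₀ (by simp [L]) (hXA0 hx), ?_⟩
      apply hUB
      intro S hS
      rcases List.mem_cons.mp hS with h | h
      · subst h; exact (hS₀X hx).2
      · obtain ⟨y, hy, rfl⟩ := List.mem_map.mp h
        have hyNN : y ∈ NN := (Set.Finite.mem_toFinset _).mp (Finset.mem_toList.mp hy)
        exact ((hf y hyNN).2.1 (hS₀X hx)).2
    · intro a ha
      simp only [Set.mem_iUnion] at ha
      obtain ⟨q, hq, ha⟩ := ha
      by_cases ha0 : a ∈ S₀.A.verts
      · exact hUA S₀ (by simp [L]) ha0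
      · obtain ⟨x, hxNN, hax⟩ := hcover q hq a ha ha0
        have hfL : f x ∈ L := by
          apply List.mem_cons_of_mem
          apply List.mem_map.mpr
          exact ⟨x, Finset.mem_toList.mpr ((Set.Finite.mem_toFinset _).mpr hxNN), rfl⟩
        exact hUA (f x) hfL hax
    · rw [order_eq_bd]
      have := Set.ncard_le_ncard hUbd2 (Set.toFinite _)
      omega

end NexusAux

theorem nexus_rank {V : Type*} [Fintype V] {G : SimpleGraph V}
    (d' k θ : ℕ) (hθ : (k + 1) ^ 2 ≤ θ)
    (hdeg : ∀ x : V, (G.neighborSet x).ncard ≤ d')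
    (T : Tangle G θ) (v : V)
    (Pnex : Set ((u : V) × G.Walk v u))
    (hpath : ∀ p ∈ Pnex, p.2.IsPath)
    (hrank : ∀ p ∈ Pnex, T.rank {x | x ∈ p.2.support} ≤ k) :
    T.rank (⋃ p ∈ Pnex, {x | x ∈ p.2.support}) ≤ (k * d') ^ k := by
  classical
  open NexusAux in
  have hranktheta : T.rank (⋃ p ∈ Pnex, {x | x ∈ p.2.support}) ≤ θ :=
    Nat.sInf_le (Set.mem_union_left _ rfl)
  have hRRpaths : ∀ p ∈ Pnex, NexusAux.RR T ∅ {x | x ∈ p.2.support} k := by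
    intro p hp
    have h := hrank p hp
    have hne : ({θ} ∪ {n | ∃ S ∈ T.mem, {x | x ∈ p.2.support} ⊆ S.A.verts ∧ S.order = n}
        : Set ℕ).Nonempty := ⟨θ, Set.mem_union_left _ rfl⟩
    have hmem := Nat.sInf_mem hne
    rcases hmem with hmem | hmem
    · left
      rw [Set.mem_singleton_iff] at hmem
      have : T.rank {x | x ∈ p.2.support} =
          sInf ({θ} ∪ {n | ∃ S ∈ T.mem, {x | x ∈ p.2.support} ⊆ S.A.verts ∧ S.order = n}) :=
        rfl
      rw [this, hmem] at h
      simp only [Set.ncard_empty]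
      omega
    · obtain ⟨S, hS, hsub, hord⟩ := hmem
      right
      refine ⟨S, hS, by simp [NexusAux.bd], hsub, ?_⟩
      have : T.rank {x | x ∈ p.2.support} =
          sInf ({θ} ∪ {n | ∃ S ∈ T.mem, {x | x ∈ p.2.support} ⊆ S.A.verts ∧ S.order = n}) :=
        rfl
      rw [this] at h
      simp only [Set.ncard_empty]
      omega
  have hcore := NexusAux.core T (max d' 1) (le_max_right d' 1)
    (fun x => le_trans (hdeg x) (le_max_left d' 1)) k ∅ v Pnex
    (by simpa using hθ)
    (fun q _ a _ ha => ha)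
    hRRpaths
  have hout : T.rank (⋃ p ∈ Pnex, {x | x ∈ p.2.support}) ≤ NexusAux.gfun (max d' 1) k := by
    rcases hcore with h | h
    · simp only [Set.ncard_empty] at h
      omega
    · obtain ⟨S, hS, _, hsub, hord⟩ := h
      have h1 : T.rank (⋃ p ∈ Pnex, {x | x ∈ p.2.support}) ≤ S.order :=
        Nat.sInf_le (Set.mem_union_right _ ⟨S, hS, hsub, rfl⟩)
      simp only [Set.ncard_empty] at hord
      omega
  rcases Nat.eq_zero_or_pos k with hk0 | hkpos
  · subst hk0
    have hg0 : NexusAux.gfun (max d' 1) 0 = 0 := rfl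
    simpa [hg0] using le_trans hout (by omega)
  rcases Nat.eq_zero_or_pos d' with hd0 | hdpos
  · exfalso
    subst hd0
    have hE : ∀ a b : V, ¬G.Adj a b := by
      intro a b hab
      have h1 : (G.neighborSet a).Nonempty := ⟨b, hab⟩
      have h2 := (Set.ncard_pos (Set.toFinite _)).mpr h1
      have h3 := hdeg a
      omega
    apply NexusAux.edgeless_no_tangle T _ hE
    have h4 : 2 ≤ (k+1)^2 := by nlinarith
    omega
  · have hmax : max d' 1 = d' := Nat.max_eq_left hdpos
    rw [hmax] at hout
    exact le_trans hout (NexusAux.gfun_le d' hdpos k)
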